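/- Let n ≥ 1, λ = (λ_1,…,λ_n) ∈ ℂⁿ, ς ∈ {+1,−1}ⁿ, a ≤ b real numbers, and r > 0. Then there exists C > 0 such that for every s ∈ ℂ with a ≤ Re s ≤ b and with |s − (λ_l − κ)| ≥ r for all 1 ≤ l ≤ n and all κ ∈ ℕ, one has |∏_{l=1}^n Γ(s − λ_l) · exp(ς_l · iπ(s − λ_l)/2)| ≤ C · (|Im s| + 1)^{n(Re s − 1/2) − Re(λ_1 + ⋯ + λ_n)}. -/

import Mathlib

open Complex Real Set MeasureTheory

lemma absGamma_le {s : ℂ} (hs : 0 < s.re) :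
    ‖Complex.Gamma s‖ ≤ Real.Gamma s.re := by
  rw [Complex.Gamma_eq_integral hs, Real.Gamma_eq_integral hs]
  rw [Complex.GammaIntegral]
  calc ‖∫ x in Ioi (0:ℝ), ((-x).exp : ℂ) * (x:ℂ) ^ (s - 1)‖
      ≤ ∫ x in Ioi (0:ℝ), ‖((-x).exp : ℂ) * (x:ℂ) ^ (s - 1)‖ := by
        simpa using
          MeasureTheory.norm_integral_le_integral_norm (fun x : ℝ => ((-x).exp : ℂ) * (x:ℂ) ^ (s - 1))
    _ = ∫ x in Ioi (0:ℝ), Real.exp (-x) * x ^ (s.re - 1) := by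
        refine setIntegral_congr_fun measurableSet_Ioi (fun x hx => ?_)
        rw [norm_mul, Complex.norm_real, Real.norm_eq_abs, _root_.abs_of_nonneg (Real.exp_pos _).le,
          Complex.norm_cpow_eq_rpow_re_of_pos hx]
        simp

lemma exp_abs_le_two_cosh (c : ℝ) : Real.exp |c| ≤ 2 * Real.cosh c := by
  rw [Real.cosh_eq]
  rcases abs_cases c with ⟨h, _⟩ | ⟨h, _⟩ <;> rw [h] <;>
    nlinarith [(Real.exp_pos c).le, (Real.exp_pos (-c)).le]

lemma gamma_half {s : ℂ} (h : s.re = 1/2) :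
    ‖Complex.Gamma s‖ ≤ Real.sqrt (2*π) * Real.exp (-(π * |s.im|) / 2) := by
  have h1 : (1:ℂ) - s = (starRingEnd ℂ) s := by
    apply Complex.ext <;> simp [h] <;> norm_num
  have h2 := Complex.Gamma_mul_Gamma_one_sub s
  rw [h1, Complex.Gamma_conj, Complex.mul_conj] at h2
  have hsin : Complex.sin (π * s) = (Real.cosh (π * s.im) : ℂ) := by
    have hps : (π:ℂ) * s = ((π/2 : ℝ) : ℂ) + ((π * s.im : ℝ) : ℂ) * Complex.I := by
      apply Complex.ext <;> simp [h] <;> ring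
    rw [hps, Complex.sin_add, Complex.cos_mul_I, Complex.sin_mul_I]
    have : Complex.sin ((π/2 : ℝ) : ℂ) = 1 := by
      push_cast; exact Complex.sin_pi_div_two
    have h2' : Complex.cos ((π/2 : ℝ) : ℂ) = 0 := by
      push_cast; exact Complex.cos_pi_div_two
    rw [this, h2', Complex.ofReal_cosh]
    ring
  rw [hsin] at h2
  have hcosh : (0:ℝ) < Real.cosh (π * s.im) := Real.cosh_pos _
  have h3 : Complex.normSq (Complex.Gamma s) = π / Real.cosh (π * s.im) := by
    have : ((Complex.normSq (Complex.Gamma s) : ℝ) : ℂ) =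
        ((π / Real.cosh (π * s.im) : ℝ) : ℂ) := by
      rw [h2]; push_cast; ring
    exact_mod_cast this
  have key : Complex.normSq (Complex.Gamma s) ≤ 2 * π * Real.exp (-(π * |s.im|)) := by
    rw [h3]
    have hc2 : Real.exp |π * s.im| ≤ 2 * Real.cosh (π * s.im) := exp_abs_le_two_cosh _
    have habs : |π * s.im| = π * |s.im| := by
      rw [abs_mul, _root_.abs_of_nonneg Real.pi_pos.le]
    rw [div_le_iff₀ hcosh, Real.exp_neg]
    rw [habs] at hc2
    have hepos : (0:ℝ) < Real.exp (π * |s.im|) := Real.exp_pos _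
    rw [← habs] at hc2 ⊢
    calc π = π * Real.exp |π * s.im| * (Real.exp |π * s.im|)⁻¹ := by
            field_simp
      _ ≤ π * (2 * Real.cosh (π * s.im)) * (Real.exp |π * s.im|)⁻¹ := by
            apply mul_le_mul_of_nonneg_right (mul_le_mul_of_nonneg_left hc2 Real.pi_pos.le)
            positivity
      _ = 2 * π * (Real.exp |π * s.im|)⁻¹ * Real.cosh (π * s.im) := by ring
  calc ‖Complex.Gamma s‖ = Real.sqrt (Complex.normSq (Complex.Gamma s)) := by
        rw [Complex.norm_def]
    _ ≤ Real.sqrt (2 * π * Real.exp (-(π * |s.im|))) := Real.sqrt_le_sqrt key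
    _ = Real.sqrt (2*π) * Real.exp (-(π * |s.im|) / 2) := by
        rw [show Real.exp (-(π * |s.im|)) = (Real.exp (-(π * |s.im|) / 2))^2 by
              rw [sq, ← Real.exp_add]; ring_nf,
          Real.sqrt_mul (by positivity), Real.sqrt_sq (Real.exp_pos _).le]

lemma arg_master {s : ℂ} (h1 : 1/2 ≤ s.re) (h2 : s.re ≤ 3/2) :
    |s.im * (1 - Complex.I * s).arg + π * s.im / 2 - π * |s.im| / 2| ≤ 2*π := by
  set w : ℂ := 1 - Complex.I * s with hw
  have hwre : w.re = 1 + s.im := by simp [hw]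
  have hwim : w.im = -s.re := by simp [hw]
  have hs0 : 0 < s.re := by linarith
  have him : w.im < 0 := by rw [hwim]; linarith
  have harg_neg : w.arg < 0 := Complex.arg_neg_iff.mpr him
  have harg_gt : -π < w.arg := Complex.neg_pi_lt_arg w
  have habsw : s.re ≤ ‖w‖ := by
    calc s.re ≤ |w.im| := by rw [hwim, abs_neg, _root_.abs_of_nonneg hs0.le]
      _ ≤ ‖w‖ := Complex.abs_im_le_norm w
  have habsw0 : 0 < ‖w‖ := lt_of_lt_of_le hs0 habsw
  rcases le_or_gt 0 s.im with ht | ht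
  · -- t ≥ 0
    have hre : 0 < w.re := by rw [hwre]; linarith
    have h5 : |w.arg| < π/2 := Complex.abs_arg_lt_pi_div_two_iff.mpr (Or.inl hre)
    rw [abs_lt] at h5
    have hsin : Real.sin (-w.arg) = s.re / ‖w‖ := by
      rw [Real.sin_neg, Complex.sin_arg, hwim]; field_simp
    have hj : 2/π * (-w.arg) ≤ s.re / ‖w‖ := by
      rw [← hsin]; exact Real.mul_le_sin (by linarith) (by linarith)
    have habs_ge_t : 1 + s.im ≤ ‖w‖ := by
      calc 1 + s.im = w.re := hwre.symm
        _ ≤ |w.re| := le_abs_self _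
        _ ≤ ‖w‖ := Complex.abs_re_le_norm w
    have hargle : -w.arg ≤ π/2 * (s.re / ‖w‖) := by
      have h7 := mul_le_mul_of_nonneg_left hj (by positivity : (0:ℝ) ≤ π/2)
      calc -w.arg = π/2 * (2/π * -w.arg) := by field_simp
        _ ≤ π/2 * (s.re / ‖w‖) := h7
    have hfrac : s.im * (s.re / ‖w‖) ≤ 3/2 := by
      rw [div_eq_inv_mul, ← mul_assoc]
      have h6 : s.im * (‖w‖)⁻¹ ≤ 1 := by
        rw [mul_inv_le_iff₀ habsw0, one_mul]
        linarith
      nlinarith [(inv_pos.mpr habsw0).le, mul_nonneg ht (inv_pos.mpr habsw0).le]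
    have habs0 : π * s.im / 2 - π * |s.im| / 2 = 0 := by
      rw [_root_.abs_of_nonneg ht]; ring
    rw [show s.im * w.arg + π * s.im / 2 - π * |s.im| / 2
        = s.im * w.arg + (π * s.im / 2 - π * |s.im| / 2) by ring, habs0, add_zero, abs_le]
    constructor
    · -- -(2π) ≤ s.im * arg w, i.e. s.im * (-arg w) ≤ 2π
      have h8 : s.im * (-w.arg) ≤ s.im * (π/2 * (s.re / ‖w‖)) :=
        mul_le_mul_of_nonneg_left hargle ht
      have h9 : s.im * (π/2 * (s.re / ‖w‖)) = π/2 * (s.im * (s.re / ‖w‖)) := by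
        ring
      have h10 : π/2 * (s.im * (s.re / ‖w‖)) ≤ π/2 * (3/2) :=
        mul_le_mul_of_nonneg_left hfrac (by positivity)
      linarith [Real.pi_pos]
    · have : s.im * w.arg ≤ 0 := mul_nonpos_of_nonneg_of_nonpos ht harg_neg.le
      nlinarith [Real.pi_pos]
  · -- t < 0
    have habs_t : |s.im| = -s.im := abs_of_neg ht
    have hkey : s.im * w.arg + π * s.im / 2 - π * |s.im| / 2
        = -(-s.im * (w.arg + π)) := by rw [habs_t]; ring
    rw [hkey, abs_neg]
    have hargpi_pos : 0 ≤ w.arg + π := by linarith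
    have hargpi_lt : w.arg + π ≤ π := by linarith
    rw [_root_.abs_of_nonneg (mul_nonneg (by linarith) hargpi_pos)]
    rcases le_or_gt s.im (-2) with ht2 | ht2
    · -- t ≤ -2 : Jordan on -w
      have hargw : (-w).arg = w.arg + π := Complex.arg_neg_eq_arg_add_pi_of_im_neg him
      have hrew : 0 < (-w).re := by
        simp only [Complex.neg_re, hwre]; linarith
      have h5 : |(-w).arg| < π/2 := Complex.abs_arg_lt_pi_div_two_iff.mpr (Or.inl hrew)
      rw [abs_lt] at h5
      have habsnw : ‖-w‖ = ‖w‖ := norm_neg w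
      have hsin : Real.sin ((-w).arg) = s.re / ‖w‖ := by
        rw [Complex.sin_arg, habsnw, Complex.neg_im, hwim, neg_neg]
      have hj : 2/π * (-w).arg ≤ s.re / ‖w‖ := by
        rw [← hsin]
        exact Real.mul_le_sin (by rw [hargw]; linarith) (by linarith)
      have hargle : (-w).arg ≤ π/2 * (s.re / ‖w‖) := by
        have h7 := mul_le_mul_of_nonneg_left hj (by positivity : (0:ℝ) ≤ π/2)
        calc (-w).arg = π/2 * (2/π * (-w).arg) := by field_simp
          _ ≤ π/2 * (s.re / ‖w‖) := h7
      -- abs w ≥ -(1+s.im) = -s.im - 1 ≥ -s.im/2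
      have habs_ge : -s.im / 2 ≤ ‖w‖ := by
        have : -(1 + s.im) ≤ |w.re| := by
          rw [hwre]; exact (neg_le_abs _)
        have h7 := Complex.abs_re_le_norm w
        linarith [abs_nonneg w.re, this.trans h7]
      -- -s.im * (arg w + π) ≤ -s.im * (π/2 * s.re / abs w) ≤ (π/2)*(3/2)*( -s.im / abs w) ≤ (3π/4)*2
      have hfrac : -s.im * (s.re / ‖w‖) ≤ 3 := by
        rw [div_eq_inv_mul, ← mul_assoc]
        have h6 : -s.im * (‖w‖)⁻¹ ≤ 2 := by
          rw [mul_inv_le_iff₀ habsw0]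
          linarith
        nlinarith [(inv_pos.mpr habsw0).le, mul_nonneg (by linarith : (0:ℝ) ≤ -s.im) (inv_pos.mpr habsw0).le]
      have h8 : -s.im * (w.arg + π) ≤ -s.im * (π/2 * (s.re / ‖w‖)) := by
        rw [← hargw]
        exact mul_le_mul_of_nonneg_left hargle (by linarith)
      have h9 : -s.im * (π/2 * (s.re / ‖w‖)) = π/2 * (-s.im * (s.re / ‖w‖)) := by
        ring
      have h10 : π/2 * (-s.im * (s.re / ‖w‖)) ≤ π/2 * 3 :=
        mul_le_mul_of_nonneg_left hfrac (by positivity)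
      linarith [Real.pi_pos]
    · -- -2 < t < 0
      have h8 : -s.im * (w.arg + π) ≤ 2 * π :=
        mul_le_mul (by linarith) hargpi_lt hargpi_pos (by norm_num)
      linarith

lemma w_ne_zero {s : ℂ} (hs : 0 < s.re) : (1 - Complex.I * s) ≠ 0 := by
  intro h
  have h2 : (1 - Complex.I * s).im = 0 := by rw [h]; simp
  simp only [Complex.sub_im, Complex.one_im, Complex.mul_im, Complex.I_re, Complex.I_im] at h2
  simp at h2
  linarith [h2]

lemma f_abs {s : ℂ} (hs : 0 < s.re) :
    ‖Complex.Gamma s * ((1 - Complex.I*s) ^ ((1/2:ℂ) - s) *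
        Complex.exp (-(π:ℂ) * Complex.I * s / 2))‖
    = ‖Complex.Gamma s‖ * (‖1 - Complex.I*s‖ ^ (1/2 - s.re) *
        Real.exp (s.im * (1 - Complex.I*s).arg + π * s.im / 2)) := by
  have hw0 := w_ne_zero hs
  rw [norm_mul, norm_mul, Complex.norm_cpow_of_ne_zero hw0, Complex.norm_exp]
  congr 1
  have h1 : ((1/2:ℂ) - s).re = 1/2 - s.re := by simp
  have h2 : ((1/2:ℂ) - s).im = -s.im := by simp
  have h3 : (-(π:ℂ) * Complex.I * s / 2).re = π * s.im / 2 := by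
    simp [Complex.div_re, Complex.mul_re, Complex.mul_im]
  rw [h1, h2, h3, div_eq_mul_inv, ← Real.exp_neg, mul_assoc, ← Real.exp_add]
  ring_nf

lemma w_upper {s : ℂ} (h1 : 0 ≤ s.re) (h2 : s.re ≤ 3/2) :
    ‖1 - Complex.I * s‖ ≤ 5/2 * (1 + |s.im|) := by
  set w : ℂ := 1 - Complex.I * s with hw
  have hwre : w.re = 1 + s.im := by simp [hw]
  have hwim : w.im = -s.re := by simp [hw]
  have e1 : |w.re| ≤ 1 + |s.im| := by
    rw [hwre]
    exact (abs_add_le 1 s.im).trans (by simp)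
  have e2 : |w.im| ≤ 3/2 := by
    rw [hwim, abs_neg, _root_.abs_of_nonneg h1]; exact h2
  calc ‖w‖ ≤ |w.re| + |w.im| := Complex.norm_le_abs_re_add_abs_im w
    _ ≤ (1 + |s.im|) + 3/2 := add_le_add e1 e2
    _ ≤ 5/2 * (1 + |s.im|) := by nlinarith [abs_nonneg s.im]

lemma w_lower {s : ℂ} (h1 : 1/2 ≤ s.re) :
    1 + |s.im| ≤ 5 * ‖1 - Complex.I * s‖ := by
  set w : ℂ := 1 - Complex.I * s with hw
  have hwre : w.re = 1 + s.im := by simp [hw]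
  have hwim : w.im = -s.re := by simp [hw]
  have hsq : (‖w‖)^2 = (1 + s.im)^2 + s.re^2 := by
    rw [Complex.sq_norm, Complex.normSq_apply, hwre, hwim]; ring
  have hkey : (1 + |s.im|)^2 ≤ (5 * ‖w‖)^2 := by
    rw [mul_pow, hsq]
    rcases abs_cases s.im with ⟨h, _⟩ | ⟨h, _⟩ <;> rw [h] <;>
      nlinarith [sq_nonneg (24*s.im + 26), sq_nonneg (s.re - 1/2), sq_nonneg (1+s.im), sq_nonneg s.re, h1]
  have h5 := Real.sqrt_le_sqrt hkey
  rw [Real.sqrt_sq (by positivity), Real.sqrt_sq (by positivity)] at h5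
  exact h5

lemma gamma_max : ∃ M, 0 < M ∧ ∀ x ∈ Icc (1/2:ℝ) (3/2), Real.Gamma x ≤ M := by
  have hc : ContinuousOn Real.Gamma (Icc (1/2) (3/2)) := by
    intro x hx
    have hd : DifferentiableAt ℝ Real.Gamma x := by
      apply Real.differentiableAt_Gamma
      intro m hm
      have h1 := hx.1
      rw [hm] at h1
      have : (0:ℝ) ≤ m := Nat.cast_nonneg m
      linarith
    exact hd.continuousAt.continuousWithinAt
  obtain ⟨x₀, hx₀, hmax⟩ := isCompact_Icc.exists_isMaxOn (nonempty_Icc.mpr (by norm_num)) hc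
  exact ⟨Real.Gamma x₀, Real.Gamma_pos_of_pos (by linarith [hx₀.1]), fun x hx => hmax hx⟩

lemma w_abs_lb {s : ℂ} (h1 : 1/2 ≤ s.re) : 1/2 ≤ ‖1 - Complex.I * s‖ := by
  have hwim : (1 - Complex.I * s).im = -s.re := by simp
  calc (1/2:ℝ) ≤ s.re := h1
    _ = |(1 - Complex.I * s).im| := by
        rw [hwim, abs_neg, _root_.abs_of_nonneg (by linarith)]
    _ ≤ ‖1 - Complex.I * s‖ := Complex.abs_im_le_norm _

lemma w_rpow_le_two {s : ℂ} (h1 : 1/2 ≤ s.re) (h2 : s.re ≤ 3/2) :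
    ‖1 - Complex.I * s‖ ^ (1/2 - s.re) ≤ 2 := by
  have hlb := w_abs_lb h1
  have hpos : (0:ℝ) < ‖1 - Complex.I * s‖ := by linarith
  rw [show (1/2 - s.re : ℝ) = -(s.re - 1/2) by ring, Real.rpow_neg hpos.le]
  have hge : (1/2 : ℝ)^(s.re - 1/2) ≤ ‖1 - Complex.I * s‖ ^ (s.re - 1/2) :=
    Real.rpow_le_rpow (by norm_num) hlb (by linarith)
  have hge2 : (1/2 : ℝ)^(1:ℝ) ≤ (1/2 : ℝ)^(s.re - 1/2) :=
    Real.rpow_le_rpow_of_exponent_ge (by norm_num) (by norm_num) (by linarith)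
  rw [Real.rpow_one] at hge2
  have h9 := inv_anti₀ (by norm_num : (0:ℝ) < 1/2) (hge2.trans hge)
  norm_num at h9
  exact h9

lemma core_strip : ∃ C, 0 < C ∧ ∀ s : ℂ, 1/2 ≤ s.re → s.re ≤ 3/2 →
    ‖Complex.Gamma s‖ ≤
      C * (1 + |s.im|) ^ (s.re - 1/2) * Real.exp (-(π * |s.im|) / 2) := by
  obtain ⟨M, hM0, hM⟩ := gamma_max
  set C₀ : ℝ := Real.sqrt (2*π) * Real.exp (2*π) * 5 with hC₀
  have hsqrt_pos : 0 < Real.sqrt (2*π) := Real.sqrt_pos.mpr (by positivity)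
  have hC₀0 : 0 < C₀ := by positivity
  set f : ℂ → ℂ := fun z => Complex.Gamma z * ((1 - Complex.I*z) ^ ((1/2:ℂ) - z) *
    Complex.exp (-(π:ℂ) * Complex.I * z / 2)) with hfdef
  have key : ∀ z : ℂ, 1/2 ≤ z.re → z.re ≤ 3/2 → ‖f z‖ ≤ C₀ := by
    intro z hz1 hz2
    apply PhragmenLindelof.vertical_strip (a := 1/2) (b := 3/2) ?_ ?_ ?_ ?_ hz1 hz2
    · -- DiffContOnCl
      have hdiff : DifferentiableOn ℂ f {z : ℂ | 0 < z.re} := by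
        intro x hx
        have hx' : 0 < x.re := hx
        have h1 : DifferentiableAt ℂ (fun z : ℂ => 1 - Complex.I*z) x :=
          (differentiable_const _).sub ((differentiable_const _).mul differentiable_id) |>.differentiableAt
        have h2 : DifferentiableAt ℂ (fun z : ℂ => (1/2:ℂ) - z) x :=
          ((differentiable_const _).sub differentiable_id).differentiableAt
        have hslit : (1 - Complex.I*x) ∈ Complex.slitPlane := by
          apply Complex.mem_slitPlane_iff.mpr
          right
          simp only [Complex.sub_im, Complex.one_im, Complex.mul_im, Complex.I_re, Complex.I_im]
          simp
          linarith
        have h3 : DifferentiableAt ℂ (fun z : ℂ => (1 - Complex.I*z) ^ ((1/2:ℂ) - z)) x :=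
          h1.cpow h2 hslit
        have h4 : DifferentiableAt ℂ (fun z : ℂ => Complex.exp (-(π:ℂ) * Complex.I * z / 2)) x := by
          apply DifferentiableAt.cexp
          exact (((differentiable_const _).mul differentiable_id).div_const 2).differentiableAt
        have h5 : DifferentiableAt ℂ Complex.Gamma x := by
          apply Complex.differentiableAt_Gamma
          intro m hm
          rw [hm] at hx'
          simp only [Complex.neg_re, Complex.natCast_re] at hx'
          linarith [Nat.cast_nonneg (α := ℝ) m]
        exact (h5.mul (h3.mul h4)).differentiableWithinAt
      apply DifferentiableOn.diffContOnCl
      apply hdiff.mono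
      intro x hx
      have hx2 : x ∈ Complex.re ⁻¹' Icc (1/2 : ℝ) (3/2) := by
        have hsub : closure (Complex.re ⁻¹' Ioo (1/2:ℝ) (3/2)) ⊆
            Complex.re ⁻¹' Icc (1/2) (3/2) := by
          rw [show Icc (1/2:ℝ) (3/2) = closure (Ioo (1/2:ℝ) (3/2)) by
            rw [closure_Ioo]; norm_num]
          exact Complex.continuous_re.closure_preimage_subset _
        exact hsub hx
      have : (1/2 : ℝ) ≤ x.re := hx2.1
      show 0 < x.re
      linarith
    · -- growth hypothesis
      refine ⟨1, by rw [show (3/2 : ℝ) - 1/2 = 1 by norm_num, div_one]; linarith [Real.pi_gt_three], π, ?_⟩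
      rw [Asymptotics.isBigO_iff]
      refine ⟨M * 2 * Real.exp (2*π), ?_⟩
      rw [Filter.eventually_inf_principal]
      apply Filter.Eventually.of_forall
      intro x hx
      have hx1 : (1/2 : ℝ) ≤ x.re := le_of_lt hx.1
      have hx2 : x.re ≤ 3/2 := le_of_lt hx.2
      have hxpos : 0 < x.re := by linarith
      have habs := f_abs hxpos
      have hEb := arg_master hx1 hx2
      rw [abs_le] at hEb
      have hexpE : Real.exp (x.im * (1 - Complex.I*x).arg + π * x.im / 2) ≤
          Real.exp (π * |x.im| / 2 + 2*π) := Real.exp_le_exp.mpr (by linarith [hEb.2])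
      have hΓ : ‖Complex.Gamma x‖ ≤ M :=
        le_trans (absGamma_le hxpos) (hM x.re ⟨hx1, hx2⟩)
      have hw2 := w_rpow_le_two hx1 hx2
      have hnorm : ‖f x‖ ≤ M * 2 * Real.exp (π * |x.im| / 2 + 2*π) := by
        rw [hfdef]
        simp only []
        rw [habs]
        have e1 : ‖1 - Complex.I*x‖ ^ (1/2 - x.re) *
            Real.exp (x.im * (1 - Complex.I*x).arg + π * x.im / 2) ≤
            2 * Real.exp (π * |x.im| / 2 + 2*π) := by
          apply mul_le_mul hw2 hexpE (Real.exp_pos _).le (by norm_num)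
        calc ‖Complex.Gamma x‖ * (‖1 - Complex.I*x‖ ^ (1/2 - x.re) *
              Real.exp (x.im * (1 - Complex.I*x).arg + π * x.im / 2))
            ≤ M * (2 * Real.exp (π * |x.im| / 2 + 2*π)) :=
              mul_le_mul hΓ e1 (by positivity) hM0.le
          _ = M * 2 * Real.exp (π * |x.im| / 2 + 2*π) := by ring
      refine hnorm.trans ?_
      rw [Real.norm_eq_abs, _root_.abs_of_nonneg (Real.exp_pos _).le]
      rw [Real.exp_add, show M * 2 * (Real.exp (π * |x.im| / 2) * Real.exp (2*π))
          = M * 2 * Real.exp (2*π) * Real.exp (π * |x.im| / 2) by ring]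
      apply mul_le_mul_of_nonneg_left _ (by positivity)
      apply Real.exp_le_exp.mpr
      rw [one_mul]
      have h6 : |x.im| ≤ Real.exp |x.im| := by
        linarith [Real.add_one_le_exp |x.im|, abs_nonneg x.im]
      nlinarith [Real.pi_pos, Real.exp_pos |x.im|, abs_nonneg x.im]
    · -- left boundary re = 1/2
      intro z hz
      have hz1 : (1/2 : ℝ) ≤ z.re := le_of_eq hz.symm
      have hz2 : z.re ≤ 3/2 := by rw [hz]; norm_num
      have hzpos : 0 < z.re := by linarith
      rw [hfdef]
      simp only []
      rw [f_abs hzpos]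
      have hEb := arg_master hz1 hz2
      rw [abs_le] at hEb
      have hexpE : Real.exp (z.im * (1 - Complex.I*z).arg + π * z.im / 2) ≤
          Real.exp (π * |z.im| / 2 + 2*π) := Real.exp_le_exp.mpr (by linarith [hEb.2])
      have hrpow : ‖1 - Complex.I*z‖ ^ (1/2 - z.re) = 1 := by
        rw [hz]; norm_num
      rw [hrpow, one_mul]
      have hΓ := gamma_half hz
      calc ‖Complex.Gamma z‖ *
            Real.exp (z.im * (1 - Complex.I*z).arg + π * z.im / 2)
          ≤ (Real.sqrt (2*π) * Real.exp (-(π * |z.im|) / 2)) *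
            Real.exp (π * |z.im| / 2 + 2*π) :=
            mul_le_mul hΓ hexpE (Real.exp_pos _).le (by positivity)
        _ = Real.sqrt (2*π) * Real.exp (2*π) := by
            rw [mul_assoc, ← Real.exp_add]; ring_nf
        _ ≤ C₀ := by rw [hC₀]; nlinarith [hsqrt_pos, Real.exp_pos (2*π)]
    · -- right boundary re = 3/2
      intro z hz
      have hz1 : (1/2 : ℝ) ≤ z.re := by rw [hz]; norm_num
      have hz2 : z.re ≤ 3/2 := le_of_eq hz
      have hzpos : 0 < z.re := by linarith
      rw [hfdef]
      simp only []
      rw [f_abs hzpos]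
      have hEb := arg_master hz1 hz2
      rw [abs_le] at hEb
      have hexpE : Real.exp (z.im * (1 - Complex.I*z).arg + π * z.im / 2) ≤
          Real.exp (π * |z.im| / 2 + 2*π) := Real.exp_le_exp.mpr (by linarith [hEb.2])
      -- Gamma z = (z-1) Gamma (z-1)
      have hz10 : z - 1 ≠ 0 := by
        intro h
        have := congrArg Complex.re h
        simp only [Complex.sub_re, Complex.one_re, Complex.zero_re, hz] at this
        norm_num at this
      have hGz : Complex.Gamma z = (z-1) * Complex.Gamma (z-1) := by
        have h7 := Complex.Gamma_add_one (z-1) hz10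
        rw [sub_add_cancel] at h7
        rw [h7]
      have hre1 : (z-1).re = 1/2 := by
        simp only [Complex.sub_re, Complex.one_re, hz]; norm_num
      have him1 : (z-1).im = z.im := by simp
      have hΓ1 : ‖Complex.Gamma (z-1)‖ ≤
          Real.sqrt (2*π) * Real.exp (-(π * |z.im|) / 2) := by
        have := gamma_half hre1
        rwa [him1] at this
      have habs_z1 : ‖z - 1‖ ≤ 1 + |z.im| := by
        calc ‖z-1‖ ≤ |(z-1).re| + |(z-1).im| := Complex.norm_le_abs_re_add_abs_im _
          _ = 1/2 + |z.im| := by rw [hre1, him1]; norm_num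
          _ ≤ 1 + |z.im| := by linarith
      have hrpow : ‖1 - Complex.I*z‖ ^ (1/2 - z.re) =
          (‖1 - Complex.I*z‖)⁻¹ := by
        rw [hz, show (1/2 - 3/2 : ℝ) = -1 by norm_num, Real.rpow_neg_one]
      rw [hrpow, hGz, norm_mul]
      have hwpos : 0 < ‖1 - Complex.I*z‖ := by linarith [w_abs_lb hz1]
      have hwl := w_lower hz1
      -- |z-1| * |Γ(z-1)| * (|w|⁻¹ * exp E) ≤ C₀
      have hfrac : ‖z-1‖ * (‖1 - Complex.I*z‖)⁻¹ ≤ 5 := by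
        rw [mul_inv_le_iff₀ hwpos]
        calc ‖z-1‖ ≤ 1 + |z.im| := habs_z1
          _ ≤ 5 * ‖1 - Complex.I*z‖ := hwl
      calc ‖z-1‖ * ‖Complex.Gamma (z-1)‖ *
            ((‖1 - Complex.I*z‖)⁻¹ *
              Real.exp (z.im * (1 - Complex.I*z).arg + π * z.im / 2))
          = (‖z-1‖ * (‖1 - Complex.I*z‖)⁻¹) *
            (‖Complex.Gamma (z-1)‖ *
              Real.exp (z.im * (1 - Complex.I*z).arg + π * z.im / 2)) := by ring
        _ ≤ 5 * ((Real.sqrt (2*π) * Real.exp (-(π * |z.im|) / 2)) *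
              Real.exp (π * |z.im| / 2 + 2*π)) := by
            apply mul_le_mul hfrac _ _ (by norm_num)
            · exact mul_le_mul hΓ1 hexpE (Real.exp_pos _).le (by positivity)
            · positivity
        _ = Real.sqrt (2*π) * Real.exp (2*π) * 5 := by
            rw [mul_assoc (Real.sqrt (2*π)), ← Real.exp_add]
            ring_nf
        _ = C₀ := rfl
  -- extraction
  refine ⟨C₀ * (5/2) * Real.exp (2*π), by positivity, ?_⟩
  intro s h1 h2
  have hspos : 0 < s.re := by linarith
  have hkey := key s h1 h2
  rw [hfdef] at hkey
  simp only [] at hkey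
  rw [f_abs hspos] at hkey
  set X : ℝ := ‖1 - Complex.I*s‖ ^ (1/2 - s.re) with hX
  set E : ℝ := s.im * (1 - Complex.I*s).arg + π * s.im / 2 with hE
  have hwpos : 0 < ‖1 - Complex.I*s‖ := by linarith [w_abs_lb h1]
  have hXpos : 0 < X := Real.rpow_pos_of_pos hwpos _
  have hEb := arg_master h1 h2
  rw [abs_le] at hEb
  have hΓle : ‖Complex.Gamma s‖ ≤ C₀ * X⁻¹ * Real.exp (-E) := by
    have h8 : ‖Complex.Gamma s‖ * (X * Real.exp E) ≤ C₀ := hkey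
    have h9 : 0 < X * Real.exp E := by positivity
    rw [show C₀ * X⁻¹ * Real.exp (-E) = C₀ / (X * Real.exp E) by
      rw [Real.exp_neg]; field_simp]
    rw [le_div_iff₀ h9]
    exact h8
  refine hΓle.trans ?_
  -- X⁻¹ = |w| ^ (s.re - 1/2) ≤ (5/2) * (1+|s.im|) ^ (s.re - 1/2)
  have hXinv : X⁻¹ = ‖1 - Complex.I*s‖ ^ (s.re - 1/2) := by
    rw [hX, ← Real.rpow_neg hwpos.le]
    norm_num
  have hXinv_le : X⁻¹ ≤ (5/2) * (1 + |s.im|) ^ (s.re - 1/2) := by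
    rw [hXinv]
    have hup := w_upper (by linarith : (0:ℝ) ≤ s.re) h2
    have h10 : ‖1 - Complex.I*s‖ ^ (s.re - 1/2) ≤
        ((5/2) * (1 + |s.im|)) ^ (s.re - 1/2) :=
      Real.rpow_le_rpow hwpos.le hup (by linarith)
    refine h10.trans ?_
    rw [Real.mul_rpow (by norm_num) (by positivity)]
    apply mul_le_mul_of_nonneg_right _ (Real.rpow_nonneg (by positivity) _)
    calc (5/2 : ℝ) ^ (s.re - 1/2) ≤ (5/2 : ℝ) ^ (1:ℝ) :=
          Real.rpow_le_rpow_of_exponent_le (by norm_num) (by linarith)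
      _ = 5/2 := Real.rpow_one _
  have hexpnegE : Real.exp (-E) ≤ Real.exp (2*π) * Real.exp (-(π * |s.im|) / 2) := by
    rw [← Real.exp_add]
    apply Real.exp_le_exp.mpr
    linarith [hEb.1]
  calc C₀ * X⁻¹ * Real.exp (-E)
      ≤ C₀ * ((5/2) * (1 + |s.im|) ^ (s.re - 1/2)) *
        (Real.exp (2*π) * Real.exp (-(π * |s.im|) / 2)) := by
        apply mul_le_mul (mul_le_mul_of_nonneg_left hXinv_le hC₀0.le) hexpnegE
          (Real.exp_pos _).le (by positivity)
    _ = C₀ * (5/2) * Real.exp (2*π) * (1 + |s.im|) ^ (s.re - 1/2) *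
        Real.exp (-(π * |s.im|) / 2) := by ring

lemma up_strip (N : ℕ) : ∃ C, 0 < C ∧ ∀ z : ℂ, 1/2 ≤ z.re → z.re ≤ 3/2 + N →
    ‖Complex.Gamma z‖ ≤
      C * (1 + |z.im|) ^ (z.re - 1/2) * Real.exp (-(π * |z.im|) / 2) := by
  induction N with
  | zero =>
    obtain ⟨C, hC, h⟩ := core_strip
    exact ⟨C, hC, fun z h1 h2 => h z h1 (by push_cast at h2; linarith)⟩
  | succ N IH =>
    obtain ⟨C, hC, h⟩ := IH
    refine ⟨C * (N + 5/2), by positivity, ?_⟩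
    intro z h1 h2
    have h1im : (0:ℝ) ≤ 1 + |z.im| := by positivity
    rcases le_or_gt z.re (3/2 + N) with hcase | hcase
    · calc ‖Complex.Gamma z‖
          ≤ C * (1 + |z.im|) ^ (z.re - 1/2) * Real.exp (-(π * |z.im|) / 2) := h z h1 hcase
        _ ≤ C * (N + 5/2) * (1 + |z.im|) ^ (z.re - 1/2) * Real.exp (-(π * |z.im|) / 2) := by
            have : C * (1 + |z.im|) ^ (z.re - 1/2) ≤
                C * (N + 5/2) * (1 + |z.im|) ^ (z.re - 1/2) := by
              apply mul_le_mul_of_nonneg_right _ (Real.rpow_nonneg h1im _)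
              nlinarith [Nat.cast_nonneg (α := ℝ) N]
            apply mul_le_mul_of_nonneg_right this (Real.exp_pos _).le
    · -- z.re ∈ (3/2+N, 3/2+N+1]
      have hz1ne : z - 1 ≠ 0 := by
        intro hzz
        have := congrArg Complex.re hzz
        simp only [Complex.sub_re, Complex.one_re, Complex.zero_re] at this
        have hN : (0:ℝ) ≤ N := Nat.cast_nonneg N
        linarith
      have hGz : Complex.Gamma z = (z-1) * Complex.Gamma (z-1) := by
        have h7 := Complex.Gamma_add_one (z-1) hz1ne
        rw [sub_add_cancel] at h7
        rw [h7]
      have hre : (z-1).re = z.re - 1 := by simp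
      have him : (z-1).im = z.im := by simp
      have hN : (0:ℝ) ≤ N := Nat.cast_nonneg N
      have hIH := h (z-1) (by rw [hre]; linarith)
        (by rw [hre]; push_cast at h2; linarith)
      rw [hre, him] at hIH
      have habsz1 : ‖z-1‖ ≤ (N + 5/2) * (1 + |z.im|) := by
        calc ‖z-1‖ ≤ |(z-1).re| + |(z-1).im| := Complex.norm_le_abs_re_add_abs_im _
          _ ≤ (N + 3/2) + |z.im| := by
              rw [hre, him]
              have : |z.re - 1| = z.re - 1 := _root_.abs_of_nonneg (by linarith)
              rw [this]
              push_cast at h2 ⊢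
              linarith
          _ ≤ (N + 5/2) * (1 + |z.im|) := by nlinarith [abs_nonneg z.im]
      rw [hGz, norm_mul]
      have hrpow : (1 + |z.im|) ^ (z.re - 1 - 1/2) * (1 + |z.im|) =
          (1 + |z.im|) ^ (z.re - 1/2) := by
        rw [← Real.rpow_add_one (by positivity)]
        ring_nf
      calc ‖z-1‖ * ‖Complex.Gamma (z-1)‖
          ≤ ((N + 5/2) * (1 + |z.im|)) *
            (C * (1 + |z.im|) ^ (z.re - 1 - 1/2) * Real.exp (-(π * |z.im|) / 2)) := by
            apply mul_le_mul habsz1 hIH (norm_nonneg _) (by positivity)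
        _ = C * (N + 5/2) * ((1 + |z.im|) ^ (z.re - 1 - 1/2) * (1 + |z.im|)) *
            Real.exp (-(π * |z.im|) / 2) := by ring
        _ = C * (N + 5/2) * (1 + |z.im|) ^ (z.re - 1/2) * Real.exp (-(π * |z.im|) / 2) := by
            rw [hrpow]

lemma full_strip (N M : ℕ) {r : ℝ} (hr : 0 < r) :
    ∃ C, 0 < C ∧ ∀ z : ℂ, 1/2 - M ≤ z.re → z.re ≤ 3/2 + N →
      (∀ κ : ℕ, r ≤ ‖z + κ‖) →
      ‖Complex.Gamma z‖ ≤
        C * (1 + |z.im|) ^ (z.re - 1/2) * Real.exp (-(π * |z.im|) / 2) := by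
  induction M with
  | zero =>
    obtain ⟨C, hC, h⟩ := up_strip N
    exact ⟨C, hC, fun z h1 h2 _ => h z (by push_cast at h1; linarith) h2⟩
  | succ M IH =>
    obtain ⟨C, hC, h⟩ := IH
    set c : ℝ := min r 1 / 2 with hc
    have hc0 : 0 < c := by positivity
    have hc2 : c ≤ 1/2 := by
      rw [hc]
      have := min_le_right r 1
      linarith
    refine ⟨C / c, by positivity, ?_⟩
    intro z h1 h2 hpole
    have h1im : (0:ℝ) ≤ 1 + |z.im| := by positivity
    have hCC : C ≤ C / c := by
      rw [le_div_iff₀ hc0]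
      nlinarith
    rcases le_or_gt (1/2 - (M:ℝ)) z.re with hcase | hcase
    · calc ‖Complex.Gamma z‖
          ≤ C * (1 + |z.im|) ^ (z.re - 1/2) * Real.exp (-(π * |z.im|) / 2) :=
            h z hcase h2 hpole
        _ ≤ C / c * (1 + |z.im|) ^ (z.re - 1/2) * Real.exp (-(π * |z.im|) / 2) := by
            apply mul_le_mul_of_nonneg_right _ (Real.exp_pos _).le
            exact mul_le_mul_of_nonneg_right hCC (Real.rpow_nonneg h1im _)
    · -- z.re < 1/2 - M
      have hz0 : z ≠ 0 := by
        intro hzz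
        have := hpole 0
        rw [hzz] at this
        simp at this
        linarith
      have hGz : Complex.Gamma z = Complex.Gamma (z+1) / z := by
        rw [Complex.Gamma_add_one z hz0]
        field_simp
      have hre : (z+1).re = z.re + 1 := by simp
      have him : (z+1).im = z.im := by simp
      have hMc : (0:ℝ) ≤ M := Nat.cast_nonneg M
      have hpole1 : ∀ κ : ℕ, r ≤ ‖(z+1) + κ‖ := by
        intro κ
        have := hpole (κ + 1)
        convert this using 2
        push_cast
        ring
      have hIH := h (z+1) (by rw [hre]; push_cast at h1; linarith)
        (by rw [hre]; push_cast at h2 ⊢; linarith) hpole1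
      rw [hre, him] at hIH
      -- |z| ≥ c * (1+|z.im|)
      have habsz : c * (1 + |z.im|) ≤ ‖z‖ := by
        rcases le_or_gt (|z.im|) 1 with him1 | him1
        · have : min r 1 ≤ ‖z‖ := le_trans (min_le_left r 1) (by simpa using hpole 0)
          have hcc : c * (1 + |z.im|) ≤ min r 1 := by
            rw [hc]
            nlinarith [abs_nonneg z.im, lt_min hr one_pos]
          linarith
        · have : |z.im| ≤ ‖z‖ := Complex.abs_im_le_norm z
          have hcc : c * (1 + |z.im|) ≤ |z.im| := by nlinarith
          linarith
      have habsz0 : 0 < ‖z‖ := norm_pos_iff.mpr hz0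
      rw [hGz, norm_div]
      have hrpow : (1 + |z.im|) ^ (z.re + 1 - 1/2) =
          (1 + |z.im|) ^ (z.re - 1/2) * (1 + |z.im|) := by
        rw [← Real.rpow_add_one (by positivity)]
        ring_nf
      rw [div_le_iff₀ habsz0]
      calc ‖Complex.Gamma (z+1)‖
          ≤ C * (1 + |z.im|) ^ (z.re + 1 - 1/2) * Real.exp (-(π * |z.im|) / 2) := hIH
        _ = (C / c * (1 + |z.im|) ^ (z.re - 1/2) * Real.exp (-(π * |z.im|) / 2)) *
            (c * (1 + |z.im|)) := by
            rw [hrpow]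
            field_simp
        _ ≤ (C / c * (1 + |z.im|) ^ (z.re - 1/2) * Real.exp (-(π * |z.im|) / 2)) *
            ‖z‖ := by
            apply mul_le_mul_of_nonneg_left habsz (by positivity)

lemma gamma_strip_bound (a b : ℝ) {r : ℝ} (hr : 0 < r) :
    ∃ C, 0 < C ∧ ∀ z : ℂ, a ≤ z.re → z.re ≤ b →
      (∀ κ : ℕ, r ≤ ‖z + κ‖) →
      ‖Complex.Gamma z‖ ≤
        C * (1 + |z.im|) ^ (z.re - 1/2) * Real.exp (-(π * |z.im|) / 2) := by
  obtain ⟨C, hC, h⟩ := full_strip ⌈b⌉₊ ⌈(1/2 : ℝ) - a⌉₊ hr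
  refine ⟨C, hC, fun z h1 h2 hpole => h z ?_ ?_ hpole⟩
  · have := Nat.le_ceil ((1/2 : ℝ) - a)
    linarith
  · have := Nat.le_ceil b
    linarith

lemma shift_rpow {c e E t : ℝ} (hE : |e| ≤ E) :
    (1 + |t - c|) ^ e ≤ (1 + |c|) ^ E * (1 + |t|) ^ e := by
  set K : ℝ := 1 + |c| with hK
  have hK1 : 1 ≤ K := by rw [hK]; linarith [abs_nonneg c]
  have hx1 : (0:ℝ) < 1 + |t - c| := by positivity
  have hx2 : (0:ℝ) < 1 + |t| := by positivity
  have h1 : 1 + |t - c| ≤ K * (1 + |t|) := by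
    have := abs_sub t c
    nlinarith [abs_nonneg t, abs_nonneg c, mul_nonneg (abs_nonneg c) (abs_nonneg t)]
  have h2 : 1 + |t| ≤ K * (1 + |t - c|) := by
    have h3 : |t| ≤ |t - c| + |c| := by
      calc |t| = |(t - c) + c| := by ring_nf
        _ ≤ |t - c| + |c| := abs_add_le _ _
    nlinarith [abs_nonneg (t - c), abs_nonneg c, mul_nonneg (abs_nonneg c) (abs_nonneg (t-c))]
  rcases le_or_gt 0 e with he | he
  · calc (1 + |t - c|) ^ e ≤ (K * (1 + |t|)) ^ e := Real.rpow_le_rpow hx1.le h1 he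
      _ = K ^ e * (1 + |t|) ^ e := Real.mul_rpow (by linarith) hx2.le
      _ ≤ K ^ E * (1 + |t|) ^ e := by
          apply mul_le_mul_of_nonneg_right _ (Real.rpow_nonneg hx2.le _)
          exact Real.rpow_le_rpow_of_exponent_le hK1 (le_trans (le_abs_self e) hE)
  · have he' : 0 ≤ -e := by linarith
    rw [show e = -(-e) by ring, Real.rpow_neg hx1.le, Real.rpow_neg hx2.le]
    set A : ℝ := (1 + |t - c|) ^ (-e) with hA
    set B : ℝ := (1 + |t|) ^ (-e) with hB
    have hApos : 0 < A := Real.rpow_pos_of_pos hx1 _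
    have hBpos : 0 < B := Real.rpow_pos_of_pos hx2 _
    have hd : B ≤ K ^ E * A := by
      calc B ≤ (K * (1 + |t - c|)) ^ (-e) := Real.rpow_le_rpow hx2.le h2 he'
        _ = K ^ (-e) * A := Real.mul_rpow (by linarith) hx1.le
        _ ≤ K ^ E * A := by
            apply mul_le_mul_of_nonneg_right _ hApos.le
            exact Real.rpow_le_rpow_of_exponent_le hK1 (le_trans (neg_le_abs e) hE)
    have hgoal : 1/A ≤ K ^ E / B := by
      rw [div_le_div_iff₀ hApos hBpos]
      linarith
    calc A⁻¹ = 1/A := (one_div A).symm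
      _ ≤ K ^ E / B := hgoal
      _ = K ^ E * B⁻¹ := div_eq_mul_inv _ _

lemma exponent_abs_le {x lo hi : ℝ} (h1 : lo ≤ x) (h2 : x ≤ hi) :
    |x| ≤ max |lo| |hi| := by
  rcases abs_cases x with ⟨h, _⟩ | ⟨h, _⟩
  · rw [h]
    exact le_trans (le_trans h2 (le_abs_self hi)) (le_max_right _ _)
  · rw [h]
    have h4 : -x ≤ -lo := by linarith
    exact le_trans (h4.trans (neg_le_abs lo)) (le_max_left _ _)

lemma factor_bound (lam0 : ℂ) (eps0 : ℝ) (heps0 : eps0 = 1 ∨ eps0 = -1)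
    (a b : ℝ) {r : ℝ} (hr : 0 < r) :
    ∃ C, 0 < C ∧ ∀ s : ℂ, a ≤ s.re → s.re ≤ b →
      (∀ κ : ℕ, r ≤ ‖s - (lam0 - κ)‖) →
      ‖Complex.Gamma (s - lam0) *
          Complex.exp ((eps0:ℂ) * Complex.I * (π:ℂ) * (s - lam0) / 2)‖
        ≤ C * (1 + |s.im|) ^ (s.re - 1/2 - lam0.re) := by
  obtain ⟨C, hC, h⟩ := gamma_strip_bound (a - lam0.re) (b - lam0.re) hr
  set E : ℝ := max |a - 1/2 - lam0.re| |b - 1/2 - lam0.re| with hEdef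
  refine ⟨C * (1 + |lam0.im|) ^ E, by positivity, ?_⟩
  intro s h1 h2 hpole
  set z : ℂ := s - lam0 with hz
  have hzre : z.re = s.re - lam0.re := by simp [hz]
  have hzim : z.im = s.im - lam0.im := by simp [hz]
  have hpole' : ∀ κ : ℕ, r ≤ ‖z + κ‖ := by
    intro κ
    have := hpole κ
    convert this using 2
    rw [hz]
    ring
  have hΓ := h z (by rw [hzre]; linarith) (by rw [hzre]; linarith) hpole'
  have hexp : ‖Complex.exp ((eps0:ℂ) * Complex.I * (π:ℂ) * z / 2)‖ ≤
      Real.exp (π * |z.im| / 2) := by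
    rw [Complex.norm_exp]
    apply Real.exp_le_exp.mpr
    have hre : ((eps0:ℂ) * Complex.I * (π:ℂ) * z / 2).re = -(eps0 * π * z.im) / 2 := by
      simp [Complex.div_re, Complex.mul_re, Complex.mul_im]
    rw [hre]
    rcases heps0 with he | he <;> rw [he] <;>
      nlinarith [le_abs_self z.im, neg_abs_le z.im, Real.pi_pos]
  have hcomb : ‖Complex.Gamma z *
      Complex.exp ((eps0:ℂ) * Complex.I * (π:ℂ) * z / 2)‖ ≤
      C * (1 + |z.im|) ^ (z.re - 1/2) := by
    rw [norm_mul]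
    calc ‖Complex.Gamma z‖ *
          ‖Complex.exp ((eps0:ℂ) * Complex.I * (π:ℂ) * z / 2)‖
        ≤ (C * (1 + |z.im|) ^ (z.re - 1/2) * Real.exp (-(π * |z.im|) / 2)) *
          Real.exp (π * |z.im| / 2) :=
          mul_le_mul hΓ hexp (norm_nonneg _) (by positivity)
      _ = C * (1 + |z.im|) ^ (z.re - 1/2) * (Real.exp (-(π * |z.im|) / 2 + π * |z.im| / 2)) := by
          rw [Real.exp_add]; ring
      _ = C * (1 + |z.im|) ^ (z.re - 1/2) := by
          rw [show -(π * |z.im|) / 2 + π * |z.im| / 2 = 0 by ring, Real.exp_zero, mul_one]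
  refine hcomb.trans ?_
  have hEbound : |z.re - 1/2| ≤ E := by
    rw [hzre, hEdef]
    exact exponent_abs_le (by linarith) (by linarith)
  have hshift : (1 + |z.im|) ^ (z.re - 1/2) ≤
      (1 + |lam0.im|) ^ E * (1 + |s.im|) ^ (z.re - 1/2) := by
    rw [hzim]
    exact shift_rpow hEbound
  calc C * (1 + |z.im|) ^ (z.re - 1/2)
      ≤ C * ((1 + |lam0.im|) ^ E * (1 + |s.im|) ^ (z.re - 1/2)) :=
        mul_le_mul_of_nonneg_left hshift hC.le
    _ = C * (1 + |lam0.im|) ^ E * (1 + |s.im|) ^ (s.re - 1/2 - lam0.re) := by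
        rw [hzre]; ring_nf

/-- Uniform moderate-growth bound on vertical strips for the gamma factor
`G(s; ς, λ) = ∏_l Γ(s - λ_l)·exp(ς_l·iπ(s - λ_l)/2)` away from small discs
around its poles. -/
theorem stmt_5 (n : ℕ) (hn : 1 ≤ n) (lam : Fin n → ℂ)
    (eps : Fin n → ℝ) (heps : ∀ l, eps l = 1 ∨ eps l = -1)
    (a b : ℝ) (hab : a ≤ b) (r : ℝ) (hr : 0 < r) :
    ∃ C : ℝ, 0 < C ∧ ∀ s : ℂ, a ≤ s.re → s.re ≤ b →
      (∀ l : Fin n, ∀ κ : ℕ, r ≤ ‖s - (lam l - κ)‖) →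
      ‖∏ l, Complex.Gamma (s - lam l) *
          Complex.exp ((eps l : ℂ) * Complex.I * Real.pi * (s - lam l) / 2)‖ ≤
        C * (|s.im| + 1) ^ ((n : ℝ) * (s.re - 1 / 2) - (∑ l, lam l).re) := by
  have hfac : ∀ l : Fin n, ∃ C, 0 < C ∧ ∀ s : ℂ, a ≤ s.re → s.re ≤ b →
      (∀ κ : ℕ, r ≤ ‖s - (lam l - κ)‖) →
      ‖Complex.Gamma (s - lam l) *
          Complex.exp ((eps l : ℂ) * Complex.I * (π:ℂ) * (s - lam l) / 2)‖
        ≤ C * (1 + |s.im|) ^ (s.re - 1/2 - (lam l).re) :=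
    fun l => factor_bound (lam l) (eps l) (heps l) a b hr
  choose D hD0 hDb using hfac
  refine ⟨∏ l, D l, Finset.prod_pos (fun l _ => hD0 l), ?_⟩
  intro s h1 h2 hpole
  rw [norm_prod]
  have hexp_eq : (∑ l, (s.re - 1/2 - (lam l).re)) = (n:ℝ) * (s.re - 1/2) - (∑ l, lam l).re := by
    rw [Finset.sum_sub_distrib, Complex.re_sum, Finset.sum_const, Finset.card_univ,
      Fintype.card_fin]
    push_cast
    ring
  calc ∏ l, ‖Complex.Gamma (s - lam l) *
        Complex.exp ((eps l : ℂ) * Complex.I * Real.pi * (s - lam l) / 2)‖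
      ≤ ∏ l, (D l * (1 + |s.im|) ^ (s.re - 1/2 - (lam l).re)) :=
        Finset.prod_le_prod (fun l _ => norm_nonneg _)
          (fun l _ => hDb l s h1 h2 (hpole l))
    _ = (∏ l, D l) * ∏ l, (1 + |s.im|) ^ (s.re - 1/2 - (lam l).re) := Finset.prod_mul_distrib
    _ = (∏ l, D l) * (1 + |s.im|) ^ (∑ l, (s.re - 1/2 - (lam l).re)) := by
        rw [← Real.rpow_sum_of_pos (by positivity : (0:ℝ) < 1 + |s.im|)]
    _ = (∏ l, D l) * (|s.im| + 1) ^ ((n:ℝ) * (s.re - 1/2) - (∑ l, lam l).re) := by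
        rw [hexp_eq, add_comm |s.im| 1]
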